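/- Work in the ring of formal power series over the polynomial ring ℤ[b]. Let S = (1 + b·x²·r(x⁴))·(1 + x + b·x³·r(x⁴))⁻¹, where r(x⁴) = ∑_{k≥0} x^{4·(2^k−1)}. Then for all n, k ≥ 0, the coefficient of bᵏ in the xⁿ-coefficient of S equals the x^{n+1}-coefficient (an integer) of (−(1+x)⁻¹)·(−x³·r(x⁴)·(1+x)⁻¹)ᵏ. In other words, the coefficient array of this polynomial sequence is the stretched Riordan array (−1/(1+x), −x³·r(x⁴)/(1+x)) with its first row removed. -/

import Mathlib

open scoped Classical

/-- The power series `r(x⁴) = ∑_{k≥0} x^(2^(k+2) - 4)` over `ℤ`. -/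
noncomputable def rueppelQuart : PowerSeries ℤ :=
  PowerSeries.mk fun n => if ∃ k : ℕ, n = 2 ^ (k + 2) - 4 then 1 else 0

/-- The power series `r(x⁴) = ∑_{k≥0} x^(2^(k+2) - 4)` over `ℤ[b]`. -/
noncomputable def rueppelQuartP : PowerSeries (Polynomial ℤ) :=
  PowerSeries.mk fun n => if ∃ k : ℕ, n = 2 ^ (k + 2) - 4 then 1 else 0

namespace RueppelAux

/-- Extract the coefficient of `bᵏ` from each `x`-coefficient. -/
noncomputable def slice (k : ℕ) (f : PowerSeries (Polynomial ℤ)) : PowerSeries ℤ :=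
  PowerSeries.mk fun n => (PowerSeries.coeff n f).coeff k

noncomputable def M : PowerSeries ℤ →+* PowerSeries (Polynomial ℤ) :=
  PowerSeries.map (Polynomial.C)

lemma coeff_M (g : PowerSeries ℤ) (n : ℕ) :
    PowerSeries.coeff n (M g) = Polynomial.C (PowerSeries.coeff n g) := by
  simp [M, PowerSeries.coeff_map]

lemma slice_add (k : ℕ) (f g : PowerSeries (Polynomial ℤ)) :
    slice k (f + g) = slice k f + slice k g := by
  ext n; simp [slice]

lemma slice_mul_M (k : ℕ) (f : PowerSeries (Polynomial ℤ)) (g : PowerSeries ℤ) :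
    slice k (f * M g) = slice k f * g := by
  ext n
  rw [slice, PowerSeries.coeff_mk, PowerSeries.coeff_mul, PowerSeries.coeff_mul,
    Polynomial.finset_sum_coeff]
  refine Finset.sum_congr rfl fun p _ => ?_
  rw [coeff_M, Polynomial.coeff_mul_C]
  simp [slice]

lemma slice_zero_CX_mul (f : PowerSeries (Polynomial ℤ)) :
    slice 0 (PowerSeries.C (Polynomial.X : Polynomial ℤ) * f) = 0 := by
  ext n
  simp [slice, Polynomial.mul_coeff_zero]

lemma slice_succ_CX_mul (k : ℕ) (f : PowerSeries (Polynomial ℤ)) :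
    slice (k + 1) (PowerSeries.C (Polynomial.X : Polynomial ℤ) * f) = slice k f := by
  ext n
  simp [slice, Polynomial.coeff_X_mul]

lemma slice_M (k : ℕ) (g : PowerSeries ℤ) : slice k (M g) = if k = 0 then g else 0 := by
  ext n
  rw [slice, PowerSeries.coeff_mk, coeff_M, Polynomial.coeff_C]
  split <;> simp_all

lemma rP_eq : rueppelQuartP = M rueppelQuart := by
  ext n
  simp [rueppelQuartP, rueppelQuart, coeff_M, apply_ite]

lemma U_eq :
    (1 + PowerSeries.X +
      PowerSeries.C (Polynomial.X : Polynomial ℤ) * PowerSeries.X ^ 3 * rueppelQuartP)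
    = M (1 + PowerSeries.X) +
      PowerSeries.C (Polynomial.X : Polynomial ℤ) * M (PowerSeries.X ^ 3 * rueppelQuart) := by
  rw [rP_eq]
  simp only [map_add, map_one, map_mul, map_pow, M, PowerSeries.map_X]
  ring

lemma RHS_eq :
    (1 + PowerSeries.C (Polynomial.X : Polynomial ℤ) * PowerSeries.X ^ 2 * rueppelQuartP)
    = M 1 + PowerSeries.C (Polynomial.X : Polynomial ℤ) * M (PowerSeries.X ^ 2 * rueppelQuart) := by
  rw [rP_eq]
  simp only [map_add, map_one, map_mul, map_pow, M, PowerSeries.map_X]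
  ring

end RueppelAux

/-- The coefficient array of the polynomial sequence given by the expansion of
`(1 + b·x²·r(x⁴))/(1 + x + b·x³·r(x⁴))` over `ℤ[b]` is the stretched Riordan array
`(-1/(1+x), -x³·r(x⁴)/(1+x))` with its first row removed: the coefficient of `bᵏ` in
the `xⁿ`-coefficient equals `[x^(n+1)] (-(1+x)⁻¹)·(-x³·r(x⁴)·(1+x)⁻¹)ᵏ`, where `J`
denotes the inverse power series of `1 + x` over `ℤ`. -/
theorem stretched_riordan_array_of_generalized_rueppel
    (S : PowerSeries (Polynomial ℤ)) (J : PowerSeries ℤ)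
    (hS : S * (1 + PowerSeries.X +
          PowerSeries.C (Polynomial.X : Polynomial ℤ) * PowerSeries.X ^ 3 * rueppelQuartP)
        = 1 + PowerSeries.C (Polynomial.X : Polynomial ℤ) * PowerSeries.X ^ 2 * rueppelQuartP)
    (hJ : J * (1 + PowerSeries.X) = 1) (n k : ℕ) :
    (PowerSeries.coeff n S).coeff k =
      PowerSeries.coeff (n + 1)
        ((-J) * (-(PowerSeries.X ^ 3 * rueppelQuart * J)) ^ k) := by
  have hS' : S * RueppelAux.M (1 + PowerSeries.X) +
      PowerSeries.C (Polynomial.X : Polynomial ℤ) *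
        (S * RueppelAux.M (PowerSeries.X ^ 3 * rueppelQuart))
      = RueppelAux.M 1 + PowerSeries.C (Polynomial.X : Polynomial ℤ) *
        RueppelAux.M (PowerSeries.X ^ 2 * rueppelQuart) := by
    rw [RueppelAux.U_eq, RueppelAux.RHS_eq] at hS
    linear_combination hS
  have L0 : RueppelAux.slice 0 S * (1 + PowerSeries.X) = 1 := by
    have h := congrArg (RueppelAux.slice 0) hS'
    rw [RueppelAux.slice_add, RueppelAux.slice_add, RueppelAux.slice_mul_M,
      RueppelAux.slice_zero_CX_mul, RueppelAux.slice_zero_CX_mul, RueppelAux.slice_M] at h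
    simpa using h
  have Ls : ∀ k, RueppelAux.slice (k + 1) S * (1 + PowerSeries.X) +
      RueppelAux.slice k S * (PowerSeries.X ^ 3 * rueppelQuart)
      = if k = 0 then PowerSeries.X ^ 2 * rueppelQuart else 0 := by
    intro k
    have h := congrArg (RueppelAux.slice (k + 1)) hS'
    rw [RueppelAux.slice_add, RueppelAux.slice_add, RueppelAux.slice_mul_M,
      RueppelAux.slice_succ_CX_mul, RueppelAux.slice_succ_CX_mul, RueppelAux.slice_mul_M,
      RueppelAux.slice_M, RueppelAux.slice_M] at h
    simpa using h
  have main : ∀ k, PowerSeries.X * RueppelAux.slice k S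
      = (-J) * (-(PowerSeries.X ^ 3 * rueppelQuart * J)) ^ k + (if k = 0 then 1 else 0) := by
    intro k
    induction k with
    | zero =>
      have h0 : RueppelAux.slice 0 S = J := by
        calc RueppelAux.slice 0 S
            = RueppelAux.slice 0 S * (J * (1 + PowerSeries.X)) := by rw [hJ]; ring
          _ = RueppelAux.slice 0 S * (1 + PowerSeries.X) * J := by ring
          _ = J := by rw [L0]; ring
      rw [h0]
      simp only [pow_zero, mul_one, reduceIte]
      linear_combination hJ
    | succ k ih =>
      have hk := Ls k
      have hsk : RueppelAux.slice (k + 1) S =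
          ((if k = 0 then PowerSeries.X ^ 2 * rueppelQuart else 0)
            - RueppelAux.slice k S * (PowerSeries.X ^ 3 * rueppelQuart)) * J := by
        calc RueppelAux.slice (k + 1) S
            = RueppelAux.slice (k + 1) S * (J * (1 + PowerSeries.X)) := by rw [hJ]; ring
          _ = (RueppelAux.slice (k + 1) S * (1 + PowerSeries.X) +
                RueppelAux.slice k S * (PowerSeries.X ^ 3 * rueppelQuart)
                - RueppelAux.slice k S * (PowerSeries.X ^ 3 * rueppelQuart)) * J := by ring
          _ = _ := by rw [hk]
      rcases Nat.eq_zero_or_pos k with hk0 | hkpos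
      · subst hk0
        simp only [reduceIte] at hsk ih
        rw [hsk]
        simp only [Nat.succ_ne_zero, if_false, add_zero]
        linear_combination (-(PowerSeries.X ^ 3 * rueppelQuart * J)) * ih
      · have hne : k ≠ 0 := Nat.pos_iff_ne_zero.mp hkpos
        simp only [if_neg hne] at hsk ih
        rw [hsk]
        simp only [Nat.succ_ne_zero, if_false, add_zero] at ih ⊢
        linear_combination (-(PowerSeries.X ^ 3 * rueppelQuart * J)) * ih
  have h := congrArg (PowerSeries.coeff (n + 1)) (main k)
  rw [PowerSeries.coeff_succ_X_mul, map_add] at h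
  have hif : PowerSeries.coeff (n + 1) (if k = 0 then (1 : PowerSeries ℤ) else 0) = 0 := by
    split <;> simp [PowerSeries.coeff_one]
  rw [hif, add_zero] at h
  have hsl : (PowerSeries.coeff n S).coeff k
      = PowerSeries.coeff n (RueppelAux.slice k S) := by
    simp [RueppelAux.slice]
  rw [hsl, h]
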